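/- If R is integrally closed, then the fixed subring of Aut_k(R) equals k: k = { λ ∈ R : σ(λ) = λ for all σ ∈ Aut_k(R) }. -/
import Mathlib

open Polynomial

/-- In a domain of characteristic `p`, the `p^n`-power map is injective. -/
lemma pow_char_pow_injective {S : Type*} [CommRing S] [IsDomain S] (p : ℕ) [Fact p.Prime]
    [CharP S p] (n : ℕ) : Function.Injective (fun z : S => z ^ p ^ n) := by
  intro a b h
  have hpn : p ^ n ≠ 0 := pow_ne_zero n (Fact.out (p := p.Prime)).ne_zero
  have h2 : (a - b) ^ p ^ n = 0 := by
    rw [sub_pow_char_pow]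
    simpa [sub_eq_zero] using h
  rw [pow_eq_zero_iff hpn] at h2
  exact sub_eq_zero.mp h2

theorem fixed_subring_eq_base_field
    (k R : Type*) [Field k] [CommRing R] [IsDomain R] [IsNoetherianRing R]
    [Infinite R] [Algebra k R] [IsIntegrallyClosed R]
    (hinj : Function.Injective (algebraMap k R))
    (horb : ∃ s : Finset R, ∀ x : R, x ∉ Set.range (algebraMap k R) →
      ∃ y ∈ s, ∃ σ : R ≃ₐ[k] R, σ y = x) :
    Set.range (algebraMap k R) = {lam : R | ∀ σ : R ≃ₐ[k] R, σ lam = lam} := by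
  classical
  obtain ⟨s, hs⟩ := horb
  refine Set.Subset.antisymm ?_ ?_
  · rintro x ⟨c, rfl⟩ σ
    exact σ.commutes c
  · intro lam hlam
    simp only [Set.mem_setOf_eq] at hlam
    by_contra hnot
    -- every fixed element outside the range lies in s
    have hfix : ∀ x : R, (∀ σ : R ≃ₐ[k] R, σ x = x) → x ∉ Set.range (algebraMap k R) →
        x ∈ s := by
      intro x hx hxr
      obtain ⟨y, hy, σ, hσ⟩ := hs x hxr
      have hyx : y = x := by
        calc y = σ.symm (σ y) := (σ.symm_apply_apply y).symm
        _ = σ.symm x := by rw [hσ]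
        _ = x := hx σ.symm
      rwa [hyx] at hy
    have hlam0 : lam ≠ 0 := by
      intro h
      exact hnot ⟨0, by rw [map_zero, h]⟩
    cases finite_or_infinite k with
    | inr hinf =>
      -- k infinite: a • lam all fixed, outside range, distinct
      have hmem : ∀ a : k, algebraMap k R a * lam ∈ insert (0 : R) s := by
        intro a
        by_cases ha : a = 0
        · simp [ha]
        · apply Finset.mem_insert_of_mem
          apply hfix
          · intro σ
            rw [map_mul, AlgEquiv.commutes, hlam σ]
          · rintro ⟨c, hc⟩
            apply hnot
            refine ⟨a⁻¹ * c, ?_⟩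
            rw [map_mul, hc, ← mul_assoc, ← map_mul, inv_mul_cancel₀ ha, map_one, one_mul]
      have hfin : Finite k := by
        have hinj2 : Function.Injective
            (fun a : k => (⟨algebraMap k R a * lam, hmem a⟩ : {z // z ∈ insert (0 : R) s})) := by
          intro a b hab
          have hab' : algebraMap k R a * lam = algebraMap k R b * lam :=
            congrArg Subtype.val hab
          exact hinj (mul_right_cancel₀ hlam0 hab')
        exact Finite.of_injective _ hinj2
      exact not_finite_iff_infinite.mpr hinf hfin
    | inl hfin =>
      haveI := hfin
      haveI : Fintype k := Fintype.ofFinite k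
      set p := ringChar k with hp_def
      obtain ⟨n, hp_prime, hcard⟩ := FiniteField.card k p
      haveI : Fact p.Prime := ⟨hp_prime⟩
      haveI : CharP R p := charP_of_injective_algebraMap hinj p
      -- Step 1: R is perfect
      have hsurj : ∀ x : R, ∃ w : R, w ^ p = x := by
        by_contra hcon
        push_neg at hcon
        obtain ⟨x, hx⟩ := hcon
        have hxr : ∀ i : ℕ, x ^ p ^ i ∉ Set.range (algebraMap k R) := by
          rintro i ⟨c, hc⟩
          obtain ⟨c', hc'⟩ :=
            (Finite.injective_iff_bijective.mp (pow_char_pow_injective (S := k) p (i + 1))).2 c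
          have hkey : x ^ p ^ i = ((algebraMap k R c') ^ p) ^ p ^ i := by
            calc x ^ p ^ i = algebraMap k R c := hc.symm
            _ = algebraMap k R (c' ^ p ^ (i + 1)) := by
                have hc'2 : c' ^ p ^ (i + 1) = c := hc'
                rw [hc'2]
            _ = (algebraMap k R c') ^ p ^ (i + 1) := by rw [map_pow]
            _ = ((algebraMap k R c') ^ p) ^ p ^ i := by
                rw [← pow_mul]
                congr 1
                rw [pow_succ']
          exact hx (algebraMap k R c') (pow_char_pow_injective (S := R) p i hkey.symm)
        have hex : ∀ i : ℕ, ∃ y ∈ s, ∃ σ : R ≃ₐ[k] R, σ y = x ^ p ^ i :=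
          fun i => hs _ (hxr i)
        choose y hy σ hσ using hex
        have key : ∀ i j : ℕ, i < j → y i = y j → False := by
          intro i j hij hyy
          set τ := ((σ i).symm.trans (σ j)) with hτdef
          have hτ : τ (x ^ p ^ i) = x ^ p ^ j := by
            have h1 : (σ i).symm (x ^ p ^ i) = y i := by
              rw [← hσ i, AlgEquiv.symm_apply_apply]
            show (σ j) ((σ i).symm (x ^ p ^ i)) = _
            rw [h1, hyy, hσ j]
          have hsplit : (x ^ p ^ (j - i)) ^ p ^ i = x ^ p ^ j := by
            rw [← pow_mul, ← pow_add]
            have : j - i + i = j := by omega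
            rw [this]
          have h2 : (τ.symm (x ^ p ^ (j - i))) ^ p ^ i = x ^ p ^ i := by
            rw [← map_pow, hsplit, ← hτ, AlgEquiv.symm_apply_apply]
          have h3 : τ.symm (x ^ p ^ (j - i)) = x :=
            pow_char_pow_injective (S := R) p i h2
          have h4 : x ^ p ^ (j - i) = (x ^ p ^ (j - i - 1)) ^ p := by
            rw [← pow_mul, ← pow_succ]
            have : j - i - 1 + 1 = j - i := by omega
            rw [this]
          exact hx (τ.symm (x ^ p ^ (j - i - 1))) (by rw [← map_pow, ← h4, h3])
        obtain ⟨i, j, hne, heq⟩ :=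
          Finite.exists_ne_map_eq_of_infinite (fun i : ℕ => (⟨y i, hy i⟩ : {z // z ∈ s}))
        have heq' : y i = y j := congrArg Subtype.val heq
        rcases hne.lt_or_gt with h | h
        · exact key i j h heq'
        · exact key j i h heq'.symm
      -- Step 2: the q-power map is surjective
      have hsurjn : ∀ m : ℕ, ∀ x : R, ∃ w : R, w ^ p ^ m = x := by
        intro m
        induction m with
        | zero => intro x; exact ⟨x, by simp⟩
        | succ m ih =>
          intro x
          obtain ⟨u, hu⟩ := hsurj x
          obtain ⟨w, hw⟩ := ih u
          exact ⟨w, by rw [pow_succ, pow_mul, hw, hu]⟩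
      -- Step 3: the q-power map is a k-algebra automorphism
      let φ : R →ₐ[k] R :=
        { toFun := fun z => z ^ p ^ (n : ℕ)
          map_one' := one_pow _
          map_mul' := fun a b => mul_pow a b _
          map_zero' := zero_pow (pow_ne_zero _ hp_prime.ne_zero)
          map_add' := fun a b => add_pow_char_pow a b p (n : ℕ)
          commutes' := fun c => by
            show (algebraMap k R c) ^ p ^ (n : ℕ) = algebraMap k R c
            rw [← map_pow]
            congr 1
            have h := FiniteField.pow_card c
            rwa [hcard] at h }
      have hφbij : Function.Bijective φ :=
        ⟨fun a b h => pow_char_pow_injective (S := R) p (n : ℕ) h,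
         fun z => hsurjn (n : ℕ) z⟩
      let e : R ≃ₐ[k] R := AlgEquiv.ofBijective φ hφbij
      have he : lam ^ Fintype.card k = lam := by
        have h := hlam e
        have hc : e lam = lam ^ p ^ (n : ℕ) := rfl
        rw [hc] at h
        rw [hcard]
        exact h
      -- Step 4: count roots of X^q - X
      have hq1 : 1 < Fintype.card k := Fintype.one_lt_card
      set f : Polynomial R := Polynomial.X ^ Fintype.card k - Polynomial.X with hfdef
      have hfdeg : f.natDegree = Fintype.card k := by
        have h1 : (Polynomial.X : Polynomial R).degree <
            ((Polynomial.X : Polynomial R) ^ Fintype.card k).degree := by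
          rw [Polynomial.degree_X_pow, Polynomial.degree_X]
          exact_mod_cast hq1
        rw [hfdef,
          Polynomial.natDegree_eq_of_degree_eq (Polynomial.degree_sub_eq_left_of_degree_lt h1),
          Polynomial.natDegree_X_pow]
      have hfne : f ≠ 0 := Polynomial.ne_zero_of_natDegree_gt (n := 0) (by omega)
      set t : Finset R := insert lam (Finset.univ.image (algebraMap k R)) with htdef
      have hroot : ∀ z ∈ t, z ∈ f.roots := by
        intro z hz
        have hzq : z ^ Fintype.card k = z := by
          rcases Finset.mem_insert.mp hz with rfl | hz'
          · exact he
          · obtain ⟨a, -, rfl⟩ := Finset.mem_image.mp hz'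
            rw [← map_pow, FiniteField.pow_card]
        rw [Polynomial.mem_roots hfne]
        simp [Polynomial.IsRoot, hfdef, hzq]
      have hsub : t.val ⊆ f.roots := by
        intro z hz
        exact hroot z hz
      have hle := Polynomial.card_le_degree_of_subset_roots hsub
      have htcard : t.card = Fintype.card k + 1 := by
        rw [htdef, Finset.card_insert_of_notMem, Finset.card_image_of_injective _ hinj,
          Finset.card_univ]
        intro hmemt
        obtain ⟨a, -, ha⟩ := Finset.mem_image.mp hmemt
        exact hnot ⟨a, ha⟩
      omega
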